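/- arXiv:1910.11759 — 2 statements merged into one kernel-verified Lean document; each statement's English description precedes it below -/
import Mathlib

section
/- Let V be a finite-dimensional vector space over a field K and T : V → V a linear operator such that V is generated (as a K-vector space) by the orbit {x, Tx, T²x, ...} of a single vector x. Then every T-invariant subspace W of V is also generated by the T-orbit of a single vector; in fact, if W is spanned by vectors p₁(T)x, ..., pₙ(T)x for polynomials p₁,...,pₙ ∈ K[X] and d = gcd(p₁,...,pₙ), then W = {q(T)(d(T)x) : q ∈ K[X]}. -/
open Polynomial

theorem stmt0 {K V : Type*} [Field K] [DecidableEq K] [AddCommGroup V] [Module K V]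
    [FiniteDimensional K V] (T : Module.End K V) (x : V)
    (hcyc : Submodule.span K (Set.range fun m : ℕ => (T ^ m) x) = ⊤)
    (W : Submodule K V) (hW : ∀ w ∈ W, T w ∈ W)
    (n : ℕ) (p : Fin n → Polynomial K)
    (hspan : W = Submodule.span K (Set.range fun i => Polynomial.aeval T (p i) x))
    (d : Polynomial K) (hd : d = Finset.univ.gcd p) :
    (W : Set V) =
      {v | ∃ q : Polynomial K, v = Polynomial.aeval T q (Polynomial.aeval T d x)} := by
  classical
  -- W is closed under aeval of any polynomial
  have hpow : ∀ (m : ℕ) (w), w ∈ W → (T ^ m) w ∈ W := by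
    intro m
    induction m with
    | zero => intro w hw; simpa using hw
    | succ m ih =>
        intro w hw
        have : (T ^ (m + 1)) w = T ((T ^ m) w) := by
          rw [pow_succ']; rfl
        rw [this]; exact hW _ (ih w hw)
  have hWa : ∀ (q : K[X]) (w), w ∈ W → (Polynomial.aeval T q) w ∈ W := by
    intro q
    induction q using Polynomial.induction_on' with
    | add f g hf hg =>
        intro w hw
        rw [map_add]
        exact W.add_mem (hf w hw) (hg w hw)
    | monomial k c =>
        intro w hw
        have : (Polynomial.aeval T (Polynomial.monomial k c)) w = c • ((T ^ k) w) := by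
          simp [Polynomial.aeval_monomial, Module.algebraMap_end_apply,
            Module.End.mul_apply]
        rw [this]
        exact W.smul_mem _ (hpow k w hw)
  -- gcd lies in the ideal generated by the family
  have hgcd : ∀ s : Finset (Fin n), s.gcd p ∈ Ideal.span (p '' (s : Set (Fin n))) := by
    intro s
    induction s using Finset.induction_on with
    | empty => simp
    | @insert a s ha ih =>
        rw [Finset.gcd_insert]
        have h1 : GCDMonoid.gcd (p a) (s.gcd p) ∈ Ideal.span {p a, s.gcd p} := by
          rw [← span_gcd]
          exact Ideal.subset_span rfl
        have h2 : Ideal.span {p a, s.gcd p} ≤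
            Ideal.span (p '' ((insert a s : Finset (Fin n)) : Set (Fin n))) := by
          rw [Ideal.span_le]
          intro y hy
          rcases hy with hy | hy
          · subst hy
            exact Ideal.subset_span ⟨a, by simp, rfl⟩
          · simp only [Set.mem_singleton_iff] at hy
            subst hy
            refine Ideal.span_mono ?_ (ih)
            apply Set.image_mono
            intro z hz; simp only [Finset.coe_insert, Set.mem_insert_iff]; right; exact hz
        exact h2 h1
  have hdmem : d ∈ Ideal.span (Set.range fun i => p i) := by
    rw [hd]
    simpa [Set.image_univ] using hgcd Finset.univ
  -- every element of the ideal generated by the p i evaluates into W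
  have hideal : ∀ r : K[X], r ∈ Ideal.span (Set.range fun i => p i) →
      (Polynomial.aeval T r) x ∈ W := by
    intro r hr
    refine Submodule.span_induction ?_ ?_ ?_ ?_ hr
    · rintro y ⟨i, rfl⟩
      rw [hspan]
      exact Submodule.subset_span ⟨i, rfl⟩
    · simpa using W.zero_mem
    · intro a b _ _ ha hb
      rw [map_add]; exact W.add_mem ha hb
    · intro a b _ hb
      have : (Polynomial.aeval T (a * b)) x
          = (Polynomial.aeval T a) ((Polynomial.aeval T b) x) := by
        rw [map_mul]; rfl
      rw [smul_eq_mul, this]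
      exact hWa a _ hb
  have hmul : ∀ q : K[X], Polynomial.aeval T q (Polynomial.aeval T d x)
      = Polynomial.aeval T (q * d) x := by
    intro q; rw [map_mul]; rfl
  ext v
  constructor
  · intro hv
    have hv' : v ∈ Submodule.span K (Set.range fun i => Polynomial.aeval T (p i) x) := by
      rw [← hspan]; exact hv
    refine Submodule.span_induction ?_ ?_ ?_ ?_ hv'
    · rintro y ⟨i, rfl⟩
      obtain ⟨c, hc⟩ : d ∣ p i := by
        rw [hd]; exact Finset.gcd_dvd (Finset.mem_univ i)
      exact ⟨c, by rw [hmul, mul_comm, ← hc]⟩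
    · exact ⟨0, by simp⟩
    · rintro a b _ _ ⟨qa, rfl⟩ ⟨qb, rfl⟩
      exact ⟨qa + qb, by rw [map_add]; rfl⟩
    · rintro c a _ ⟨qa, rfl⟩
      refine ⟨Polynomial.C c * qa, ?_⟩
      rw [map_mul]
      simp [Module.algebraMap_end_apply, Module.End.mul_apply]
  · rintro ⟨q, rfl⟩
    rw [hmul]
    exact hideal _ (Ideal.mul_mem_left _ q hdmem)
end

section
/- Let V be a finite-dimensional vector space over a field K and T : V → V a linear operator whose minimal polynomial is f^n for an irreducible polynomial f ∈ K[X], and suppose V is T-cyclic (spanned by the T-orbit of one vector). Then the T-invariant subspaces of V are exactly the subspaces ker(f(T)^k) for k ∈ {0, 1, ..., n}; in particular the lattice of T-invariant subspaces is a chain with n+1 elements. -/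
open Polynomial

theorem stmt2 {K V : Type*} [Field K] [AddCommGroup V] [Module K V]
    [FiniteDimensional K V] (T : Module.End K V)
    (f : Polynomial K) (n : ℕ) (hirr : Irreducible f)
    (hmin : minpoly K T = f ^ n)
    (v : V) (hcyc : Submodule.span K (Set.range fun m : ℕ => (T ^ m) v) = ⊤) :
    (∀ W : Submodule K V,
      (∀ w ∈ W, T w ∈ W) ↔
        ∃ k ≤ n, W = LinearMap.ker (Polynomial.aeval T f ^ k)) ∧
    IsChain (· ≤ ·) {W : Submodule K V | ∀ w ∈ W, T w ∈ W} ∧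
    Nat.card {W : Submodule K V // ∀ w ∈ W, T w ∈ W} = n + 1 := by
  set g := Polynomial.aeval T f with hgdef
  have hfne : f ≠ 0 := hirr.ne_zero
  -- every vector is a polynomial in T applied to v
  have hsurj : ∀ x : V, ∃ p : K[X], Polynomial.aeval T p v = x := by
    intro x
    have hx : x ∈ Submodule.span K (Set.range fun m : ℕ => (T ^ m) v) := by
      rw [hcyc]; trivial
    induction hx using Submodule.span_induction with
    | mem x hx =>
      obtain ⟨m, rfl⟩ := hx
      exact ⟨X ^ m, by simp⟩
    | zero => exact ⟨0, by simp⟩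
    | add x y _ _ hx hy =>
      obtain ⟨p, hp⟩ := hx; obtain ⟨q, hq⟩ := hy
      exact ⟨p + q, by simp [hp, hq]⟩
    | smul a x _ hx =>
      obtain ⟨p, hp⟩ := hx
      exact ⟨a • p, by simp [hp]⟩
  -- annihilator of v is (f^n)
  have haevalfn : Polynomial.aeval T (f ^ n) = 0 := by
    rw [← hmin]; exact minpoly.aeval K T
  have hann : ∀ p : K[X], Polynomial.aeval T p v = 0 ↔ f ^ n ∣ p := by
    intro p
    constructor
    · intro hp
      rw [← hmin]
      apply minpoly.dvd
      ext x
      obtain ⟨q, rfl⟩ := hsurj x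
      show Polynomial.aeval T p (Polynomial.aeval T q v) = (0 : Module.End K V) v
      rw [← Module.End.mul_apply, ← map_mul, mul_comm, map_mul, Module.End.mul_apply, hp,
        map_zero]
      simp
    · rintro ⟨q, rfl⟩
      rw [mul_comm, map_mul, Module.End.mul_apply, haevalfn]
      simp
  -- invariant subspaces are invariant under all polynomials in T
  have hpowmem : ∀ (W : Submodule K V), (∀ w ∈ W, T w ∈ W) →
      ∀ (i : ℕ) (w : V), w ∈ W → (T ^ i) w ∈ W := by
    intro W hW i
    induction i with
    | zero => intro w hw; simpa using hw
    | succ i ih =>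
      intro w hw
      rw [pow_succ, Module.End.mul_apply]
      exact ih _ (hW w hw)
  have hWinv : ∀ (W : Submodule K V), (∀ w ∈ W, T w ∈ W) →
      ∀ (q : K[X]) (w : V), w ∈ W → Polynomial.aeval T q w ∈ W := by
    intro W hW q w hw
    induction q using Polynomial.induction_on' with
    | add p q hp hq => rw [map_add, LinearMap.add_apply]; exact W.add_mem hp hq
    | monomial i a =>
      have : Polynomial.aeval T (monomial i a) w = a • (T ^ i) w := by
        simp [aeval_monomial, Module.algebraMap_end_apply]
      rw [this]
      exact W.smul_mem a (hpowmem W hW i w hw)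
  -- commutation
  have hcomm : ∀ p : K[X], (Polynomial.aeval T p) * T = T * Polynomial.aeval T p := by
    intro p
    have h : Polynomial.aeval T p * Polynomial.aeval T (X : K[X])
        = Polynomial.aeval T (X : K[X]) * Polynomial.aeval T p := by
      rw [← map_mul, ← map_mul, mul_comm]
    simpa using h
  have hc : ∀ k : ℕ, g ^ k * T = T * g ^ k := fun k =>
    (Commute.pow_left (hcomm f) k)
  -- kernels are invariant (easy direction)
  have hker_inv : ∀ k : ℕ, ∀ w ∈ LinearMap.ker (g ^ k), T w ∈ LinearMap.ker (g ^ k) := by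
    intro k w hw
    rw [LinearMap.mem_ker] at hw ⊢
    rw [← Module.End.mul_apply, hc k, Module.End.mul_apply, hw, map_zero]
  -- monotonicity
  have hmono : ∀ k j : ℕ, k ≤ j → LinearMap.ker (g ^ k) ≤ LinearMap.ker (g ^ j) := by
    intro k j hkj w hw
    rw [LinearMap.mem_ker] at hw ⊢
    rw [← Nat.sub_add_cancel hkj, pow_add, Module.End.mul_apply, hw, map_zero]
  -- applying g^k to aeval T p v
  have happ : ∀ (k : ℕ) (p : K[X]),
      (g ^ k) (Polynomial.aeval T p v) = Polynomial.aeval T (f ^ k * p) v := by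
    intro k p
    rw [map_mul, map_pow, Module.End.mul_apply]
  -- hard direction
  have hmain : ∀ W : Submodule K V, (∀ w ∈ W, T w ∈ W) →
      ∃ k ≤ n, W = LinearMap.ker (g ^ k) := by
    intro W hW
    set I : Ideal K[X] :=
      { carrier := {p | Polynomial.aeval T p v ∈ W}
        add_mem' := by
          intro p q hp hq
          simp only [Set.mem_setOf_eq, map_add, LinearMap.add_apply] at *
          exact W.add_mem hp hq
        zero_mem' := by simp
        smul_mem' := by
          intro c p hp
          simp only [Set.mem_setOf_eq, smul_eq_mul] at *
          rw [map_mul, Module.End.mul_apply]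
          exact hWinv W hW c _ hp } with hI
    have hmemI : ∀ p : K[X], p ∈ I ↔ Polynomial.aeval T p v ∈ W := fun p => Iff.rfl
    have hfnI : f ^ n ∈ I := by
      rw [hmemI, haevalfn]
      exact W.zero_mem
    have hgen : Submodule.IsPrincipal.generator I ∣ f ^ n :=
      (Submodule.IsPrincipal.mem_iff_generator_dvd I).mp hfnI
    obtain ⟨k, hk, hassoc⟩ := (dvd_prime_pow hirr.prime n).mp hgen
    have hmemI' : ∀ p : K[X], p ∈ I ↔ f ^ k ∣ p := by
      intro p
      rw [Submodule.IsPrincipal.mem_iff_generator_dvd I, hassoc.dvd_iff_dvd_left]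
    refine ⟨n - k, Nat.sub_le n k, ?_⟩
    ext x
    obtain ⟨p, rfl⟩ := hsurj x
    rw [LinearMap.mem_ker, happ, hann, ← hmemI, hmemI']
    constructor
    · rintro ⟨c, rfl⟩
      refine ⟨c, ?_⟩
      rw [← mul_assoc, ← pow_add, Nat.sub_add_cancel hk]
    · intro h
      have h' : f ^ (n - k) * f ^ k ∣ f ^ (n - k) * p := by
        rw [← pow_add, Nat.sub_add_cancel hk]; exact h
      exact (mul_dvd_mul_iff_left (pow_ne_zero _ hfne)).mp h'
  -- distinctness
  have hne : ∀ k j : ℕ, k < j → j ≤ n →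
      LinearMap.ker (g ^ k) ≠ LinearMap.ker (g ^ j) := by
    intro k j hkj hjn heq
    have hw1 : Polynomial.aeval T (f ^ (n - j)) v ∈ LinearMap.ker (g ^ j) := by
      rw [LinearMap.mem_ker, happ, hann, ← pow_add, Nat.add_sub_cancel' hjn]
    rw [← heq, LinearMap.mem_ker, happ, hann, ← pow_add] at hw1
    have := (pow_dvd_pow_iff hfne hirr.not_isUnit).mp hw1
    omega
  refine ⟨?_, ?_, ?_⟩
  · intro W
    constructor
    · intro hW
      exact hmain W hW
    · rintro ⟨k, hk, rfl⟩
      exact hker_inv k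
  · intro W1 h1 W2 h2 _
    obtain ⟨k1, hk1, rfl⟩ := hmain W1 h1
    obtain ⟨k2, hk2, rfl⟩ := hmain W2 h2
    rcases le_total k1 k2 with h | h
    · exact Or.inl (hmono _ _ h)
    · exact Or.inr (hmono _ _ h)
  · have hbij : Function.Bijective
        (fun k : Fin (n + 1) =>
          (⟨LinearMap.ker (g ^ (k : ℕ)), hker_inv k⟩ :
            {W : Submodule K V // ∀ w ∈ W, T w ∈ W})) := by
      constructor
      · intro k j hkj
        simp only [Subtype.mk.injEq] at hkj
        by_contra hne'
        rcases Nat.lt_or_ge (k : ℕ) j with h | h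
        · exact hne k j h (Nat.lt_succ_iff.mp j.isLt) hkj
        · have h' : (j : ℕ) < k := lt_of_le_of_ne h (by
            intro h''; exact hne' (Fin.ext h''.symm))
          exact hne j k h' (Nat.lt_succ_iff.mp k.isLt) hkj.symm
      · rintro ⟨W, hW⟩
        obtain ⟨k, hk, rfl⟩ := hmain W hW
        exact ⟨⟨k, Nat.lt_succ_of_le hk⟩, rfl⟩
    rw [← Nat.card_eq_of_bijective _ hbij]
    simp
end
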